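/- Let T be a metric tree (a geodesic metric space in which every pair of points is joined by a unique arc) and let η : [0,1] → T be a geodesic with η(0) ≠ η(1), and β : [0,1] → T a path with β(0) = η(0) and β(1) = η(1). Then for any finite increasing sequence 0 = t₀ < t₁ < ... < t_{n+1} = 1, there exist times 0 = t₀* < t₁* < ... < t_{n+1}* = 1 such that β(tᵢ*) = η(tᵢ) for all i. -/

import Mathlib

open Set

/-- `A` is an arc in `T` from `x` to `y`: the image of an injective continuous map
on `[0,1]` with endpoints `x` and `y`. -/
def IsArcIn {T : Type*} [TopologicalSpace T] (A : Set T) (x y : T) : Prop :=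
  ∃ f : ℝ → T, ContinuousOn f (Icc 0 1) ∧ InjOn f (Icc 0 1) ∧
    f 0 = x ∧ f 1 = y ∧ f '' (Icc 0 1) = A

/-- `g : [0,1] → T` is a geodesic: `d(g s, g t) = d(g 0, g 1)·|s - t|`. -/
def IsGeodesicPath {T : Type*} [PseudoMetricSpace T] (g : ℝ → T) : Prop :=
  ∀ s ∈ Icc (0:ℝ) 1, ∀ t ∈ Icc (0:ℝ) 1,
    dist (g s) (g t) = dist (g 0) (g 1) * |s - t|

/-- A metric tree: any two points are joined by a geodesic, and any two distinct points
are joined by a unique arc. -/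
structure IsMetricTree (T : Type*) [MetricSpace T] : Prop where
  exists_geodesic : ∀ x y : T, ∃ g : ℝ → T, g 0 = x ∧ g 1 = y ∧ IsGeodesicPath g
  unique_arc : ∀ x y : T, x ≠ y → ∀ A B : Set T,
    IsArcIn A x y → IsArcIn B x y → A = B

section Aux
variable {T : Type*} [MetricSpace T]

lemma IsGeodesicPath.continuousOn {g : ℝ → T} (hg : IsGeodesicPath g) :
    ContinuousOn g (Icc 0 1) := by
  have : LipschitzOnWith ⟨dist (g 0) (g 1), dist_nonneg⟩ g (Icc 0 1) := by
    apply LipschitzOnWith.of_dist_le_mul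
    intro x hx y hy
    rw [hg x hx y hy, Real.dist_eq]; exact le_refl _
  exact this.continuousOn

lemma IsGeodesicPath.injOn {g : ℝ → T} (hg : IsGeodesicPath g) (hne : g 0 ≠ g 1) :
    InjOn g (Icc 0 1) := by
  intro x hx y hy h
  have hD : 0 < dist (g 0) (g 1) := dist_pos.2 hne
  have := hg x hx y hy
  rw [h, dist_self] at this
  have : |x - y| = 0 := by
    rcases mul_eq_zero.1 this.symm with h' | h'
    · exact absurd h' (ne_of_gt hD)
    · exact h'
  linarith [abs_eq_zero.1 this, sub_eq_zero.1 (abs_eq_zero.1 this)]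

lemma IsGeodesicPath.const {g : ℝ → T} (hg : IsGeodesicPath g) (hne : g 0 = g 1) :
    ∀ t ∈ Icc (0:ℝ) 1, g t = g 0 := by
  intro t ht
  have := hg t ht 0 ⟨le_refl 0, zero_le_one⟩
  rw [← hne, dist_self, zero_mul] at this
  exact dist_eq_zero.1 this

lemma IsGeodesicPath.reparam {g : ℝ → T} (hg : IsGeodesicPath g) {a b : ℝ}
    (ha : 0 ≤ a) (hab : a ≤ b) (hb : b ≤ 1) :
    IsGeodesicPath (fun u => g (a + u * (b - a))) := by
  intro s hs t ht
  obtain ⟨hs0, hs1⟩ := hs; obtain ⟨ht0, ht1⟩ := ht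
  have hmem : ∀ u : ℝ, 0 ≤ u → u ≤ 1 → a + u * (b - a) ∈ Icc (0:ℝ) 1 := by
    intro u h0 h1
    constructor <;> nlinarith
  simp only
  rw [hg _ (hmem s hs0 hs1) _ (hmem t ht0 ht1)]
  have h0' : a + (0:ℝ) * (b - a) = a := by ring
  have h1' : a + (1:ℝ) * (b - a) = b := by ring
  rw [h0', h1', hg a ⟨ha, le_trans hab hb⟩ b ⟨le_trans ha hab, hb⟩]
  rw [abs_sub_comm a b, abs_of_nonneg (by linarith : (0:ℝ) ≤ b - a)]
  have : |a + s * (b - a) - (a + t * (b - a))| = |s - t| * (b - a) := by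
    rw [show a + s * (b - a) - (a + t * (b - a)) = (s - t) * (b - a) by ring,
      abs_mul, abs_of_nonneg (by linarith : (0:ℝ) ≤ b - a)]
  rw [this]; ring

omit [MetricSpace T] in
lemma affine_image {a b : ℝ} (hab : a ≤ b) :
    (fun u : ℝ => a + u * (b - a)) '' Icc 0 1 = Icc a b := by
  rcases eq_or_lt_of_le hab with rfl | hlt
  · have : (fun u : ℝ => a + u * (a - a)) = fun _ => a := by funext u; ring_nf
    rw [this, Icc_self]
    exact Set.Nonempty.image_const (nonempty_Icc.2 zero_le_one) a
  · ext w
    constructor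
    · rintro ⟨u, ⟨hu0, hu1⟩, rfl⟩
      constructor <;> · simp only; nlinarith
    · rintro ⟨hw0, hw1⟩
      refine ⟨(w - a) / (b - a), ⟨div_nonneg (by linarith) (by linarith), ?_⟩, ?_⟩
      · rw [div_le_one (by linarith)]; linarith
      · simp only
        rw [div_mul_cancel₀ _ (by linarith : b - a ≠ 0)]
        ring

omit [MetricSpace T] in
lemma reparam_image {g : ℝ → T} {a b : ℝ} (hab : a ≤ b) :
    (fun u : ℝ => g (a + u * (b - a))) '' Icc 0 1 = g '' Icc a b := by
  rw [show (fun u : ℝ => g (a + u * (b - a))) = g ∘ (fun u : ℝ => a + u * (b - a)) from rfl,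
    image_comp, affine_image hab]

end Aux

section GeodImg
variable {T : Type*} [MetricSpace T]

noncomputable def geodFun (hT : IsMetricTree T) (x y : T) : ℝ → T :=
  (hT.exists_geodesic x y).choose

lemma geodFun_zero (hT : IsMetricTree T) (x y : T) : geodFun hT x y 0 = x :=
  (hT.exists_geodesic x y).choose_spec.1

lemma geodFun_one (hT : IsMetricTree T) (x y : T) : geodFun hT x y 1 = y :=
  (hT.exists_geodesic x y).choose_spec.2.1

lemma geodFun_geodesic (hT : IsMetricTree T) (x y : T) : IsGeodesicPath (geodFun hT x y) :=
  (hT.exists_geodesic x y).choose_spec.2.2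

noncomputable def geodImg (hT : IsMetricTree T) (x y : T) : Set T :=
  geodFun hT x y '' Icc 0 1

lemma isArcIn_of_geodesic {g : ℝ → T} (hg : IsGeodesicPath g) (hne : g 0 ≠ g 1) :
    IsArcIn (g '' Icc 0 1) (g 0) (g 1) :=
  ⟨g, hg.continuousOn, hg.injOn hne, rfl, rfl, rfl⟩

lemma geodImg_eq (hT : IsMetricTree T) {x y : T} {g : ℝ → T} (hg : IsGeodesicPath g)
    (h0 : g 0 = x) (h1 : g 1 = y) : g '' Icc 0 1 = geodImg hT x y := by
  by_cases hxy : x = y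
  · subst hxy; subst h0
    have h1' : g 1 = g 0 := h1
    have hconst := hg.const h1'.symm
    have e1 : g '' Icc 0 1 = {g 0} := by
      apply Subset.antisymm
      · rintro w ⟨u, hu, rfl⟩
        rw [hconst u hu]; exact rfl
      · rintro w rfl; exact ⟨0, ⟨le_refl 0, zero_le_one⟩, rfl⟩
    have hconst2 := (geodFun_geodesic hT (g 0) (g 0)).const
      (by rw [geodFun_zero, geodFun_one])
    have e2 : geodImg hT (g 0) (g 0) = {g 0} := by
      apply Subset.antisymm
      · rintro w ⟨u, hu, rfl⟩
        rw [hconst2 u hu, geodFun_zero]; exact rfl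
      · rintro w rfl
        exact ⟨0, ⟨le_refl 0, zero_le_one⟩, geodFun_zero hT _ _⟩
    rw [e1, e2]
  · apply hT.unique_arc x y hxy
    · rw [← h0, ← h1]
      exact isArcIn_of_geodesic hg (by rw [h0, h1]; exact hxy)
    · have := isArcIn_of_geodesic (geodFun_geodesic hT x y)
        (by rw [geodFun_zero, geodFun_one]; exact hxy)
      rwa [geodFun_zero, geodFun_one] at this

lemma left_mem_geodImg (hT : IsMetricTree T) (x y : T) : x ∈ geodImg hT x y :=
  ⟨0, ⟨le_refl 0, zero_le_one⟩, geodFun_zero hT x y⟩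

lemma right_mem_geodImg (hT : IsMetricTree T) (x y : T) : y ∈ geodImg hT x y :=
  ⟨1, ⟨zero_le_one, le_refl 1⟩, geodFun_one hT x y⟩

lemma dist_le_of_mem_geodImg (hT : IsMetricTree T) {x y w : T}
    (hw : w ∈ geodImg hT x y) : dist x w ≤ dist x y := by
  obtain ⟨u, hu, rfl⟩ := hw
  have := geodFun_geodesic hT x y 0 ⟨le_refl 0, zero_le_one⟩ u hu
  rw [geodFun_zero, geodFun_one] at this
  rw [this, abs_of_nonpos (by linarith [hu.1] : (0:ℝ) - u ≤ 0)]
  nlinarith [dist_nonneg (x := x) (y := y), hu.1, hu.2]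

lemma eq_of_mem_geodImg_self (hT : IsMetricTree T) {x w : T}
    (hw : w ∈ geodImg hT x x) : w = x := by
  have := dist_le_of_mem_geodImg hT hw
  rw [dist_self] at this
  exact (dist_le_zero.1 (by rwa [dist_comm] at this))

lemma geodImg_symm (hT : IsMetricTree T) (x y : T) : geodImg hT x y = geodImg hT y x := by
  set g := geodFun hT x y
  have hg := geodFun_geodesic hT x y
  have hrev : IsGeodesicPath (fun u => g (1 - u)) := by
    intro s hs t ht
    have hs' : 1 - s ∈ Icc (0:ℝ) 1 := ⟨by linarith [hs.2], by linarith [hs.1]⟩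
    have ht' : 1 - t ∈ Icc (0:ℝ) 1 := ⟨by linarith [ht.2], by linarith [ht.1]⟩
    simp only
    rw [hg _ hs' _ ht']
    rw [show (1:ℝ) - 0 = 1 by ring, show (1:ℝ) - 1 = 0 by ring]
    rw [dist_comm (g 1) (g 0)]
    congr 1
    rw [show (1:ℝ) - s - (1 - t) = t - s by ring, abs_sub_comm]
  have himg : (fun u => g (1 - u)) '' Icc 0 1 = g '' Icc 0 1 := by
    apply Subset.antisymm
    · rintro w ⟨u, hu, rfl⟩
      exact ⟨1 - u, ⟨by linarith [hu.2], by linarith [hu.1]⟩, rfl⟩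
    · rintro w ⟨u, hu, rfl⟩
      exact ⟨1 - u, ⟨by linarith [hu.2], by linarith [hu.1]⟩, by simp⟩
  have := geodImg_eq hT hrev (by simp only [sub_zero]; exact geodFun_one hT x y)
    (by simp only [sub_self]; exact geodFun_zero hT x y)
  rw [himg] at this
  exact this

end GeodImg

section Tripod
variable {T : Type*} [MetricSpace T]

noncomputable def clampI (u : ℝ) : ℝ := max 0 (min 1 u)

lemma clampI_continuous : Continuous clampI :=
  continuous_const.max (continuous_const.min continuous_id)

lemma clampI_mem (u : ℝ) : clampI u ∈ Icc (0:ℝ) 1 :=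
  ⟨le_max_left _ _, max_le zero_le_one (min_le_left _ _)⟩

lemma clampI_eq {u : ℝ} (hu : u ∈ Icc (0:ℝ) 1) : clampI u = u := by
  unfold clampI
  rw [min_eq_right hu.2, max_eq_right hu.1]

lemma geodImg_subset_union (hT : IsMetricTree T) (x z z' : T) :
    geodImg hT x z' ⊆ geodImg hT x z ∪ geodImg hT z z' := by
  by_cases hxz : x = z
  · subst hxz; exact subset_union_right
  by_cases hzz' : z = z'
  · subst hzz'; exact subset_union_left
  by_cases hxz' : x = z'
  · subst hxz'
    intro w hw
    rw [eq_of_mem_geodImg_self hT hw]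
    exact Or.inl (left_mem_geodImg hT x z)
  set a := geodFun hT x z with ha_def
  set b := geodFun hT z z' with hb_def
  have hga : IsGeodesicPath a := geodFun_geodesic hT x z
  have hgb : IsGeodesicPath b := geodFun_geodesic hT z z'
  have ha0 : a 0 = x := geodFun_zero hT x z
  have ha1 : a 1 = z := geodFun_one hT x z
  have hb0 : b 0 = z := geodFun_zero hT z z'
  have hb1 : b 1 = z' := geodFun_one hT z z'
  have haInj : InjOn a (Icc 0 1) := hga.injOn (by rw [ha0, ha1]; exact hxz)
  have hbInj : InjOn b (Icc 0 1) := hgb.injOn (by rw [hb0, hb1]; exact hzz')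
  set A := a '' Icc 0 1 with hA_def
  have hAg : A = geodImg hT x z := rfl
  have hBg : b '' Icc 0 1 = geodImg hT z z' := rfl
  have hAcompact : IsCompact A := isCompact_Icc.image_of_continuousOn hga.continuousOn
  set S := {u : ℝ | u ∈ Icc (0:ℝ) 1 ∧ b u ∈ A} with hS_def
  have hS0 : (0:ℝ) ∈ S := ⟨⟨le_refl 0, zero_le_one⟩, by
    rw [hb0, ← ha1]; exact ⟨1, ⟨zero_le_one, le_refl 1⟩, rfl⟩⟩
  have hSclosed : IsClosed S := by
    have : S = Icc 0 1 ∩ b ⁻¹' A := by ext u; simp [hS_def, mem_inter_iff]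
    rw [this]
    exact hgb.continuousOn.preimage_isClosed_of_isClosed isClosed_Icc hAcompact.isClosed
  have hSbdd : BddAbove S := ⟨1, fun u hu => hu.1.2⟩
  set τ := sSup S with hτ_def
  have hτS : τ ∈ S := hSclosed.csSup_mem ⟨0, hS0⟩ hSbdd
  have hτmax : ∀ u ∈ Icc (0:ℝ) 1, b u ∈ A → u ≤ τ := fun u hu hbu => le_csSup hSbdd ⟨hu, hbu⟩
  obtain ⟨σ, hσmem, hσ⟩ := hτS.2
  have hτ0 : 0 ≤ τ := hτS.1.1
  have hτ1 : τ ≤ 1 := hτS.1.2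
  by_cases hτeq1 : τ = 1
  · -- z' = a σ : geodesic [x,z'] is an initial segment of [x,z]
    intro w hw
    left
    have hz' : a σ = z' := by rw [hσ, hτeq1, hb1]
    have hrep : IsGeodesicPath (fun u => a (0 + u * (σ - 0))) :=
      hga.reparam (le_refl 0) hσmem.1 hσmem.2
    have heq := geodImg_eq hT (x := x) (y := z') hrep (by norm_num [ha0]) (by norm_num [hz'])
    rw [reparam_image hσmem.1] at heq
    rw [← hAg]
    exact image_mono (f := a) (Icc_subset_Icc (le_refl 0) hσmem.2) (heq ▸ hw)
  have hτlt1 : τ < 1 := lt_of_le_of_ne hτ1 hτeq1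
  by_cases hm : b τ = x
  · -- geodesic [x,z'] is a final segment of [z,z']
    intro w hw
    right
    have hrep : IsGeodesicPath (fun u => b (τ + u * (1 - τ))) :=
      hgb.reparam hτ0 hτ1 (le_refl 1)
    have heq := geodImg_eq hT (x := x) (y := z') hrep (by norm_num [hm]) (by norm_num [hb1])
    rw [reparam_image hτ1] at heq
    rw [← hBg]
    exact image_mono (f := b) (Icc_subset_Icc hτ0 (le_refl 1)) (heq ▸ hw)
  -- main case : concatenate a|[0,σ] with b|[τ,1]
  have hσ0 : σ ≠ 0 := by
    intro h
    rw [h, ha0] at hσ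
    exact hm hσ.symm
  have hσpos : 0 < σ := lt_of_le_of_ne hσmem.1 (Ne.symm hσ0)
  set f : ℝ → T := fun u => if u ≤ 1/2 then a (clampI (2*σ*u))
    else b (clampI (τ + (2*u-1)*(1-τ))) with hf_def
  have hac : Continuous (fun u : ℝ => a (clampI u)) :=
    hga.continuousOn.comp_continuous clampI_continuous clampI_mem
  have hbc : Continuous (fun u : ℝ => b (clampI u)) :=
    hgb.continuousOn.comp_continuous clampI_continuous clampI_mem
  have hfc : Continuous f := by
    apply Continuous.if_le (hac.comp (by fun_prop)) (hbc.comp (by fun_prop))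
      continuous_id continuous_const
    intro u hu
    simp only [Function.comp, id] at hu ⊢
    rw [hu]
    rw [show 2*σ*(1/2:ℝ) = σ by ring, show τ + (2*(1/2:ℝ)-1)*(1-τ) = τ by ring,
      clampI_eq hσmem, clampI_eq ⟨hτ0, hτ1⟩, hσ]
  have harg1 : ∀ u : ℝ, 0 ≤ u → u ≤ 1/2 → 2*σ*u ∈ Icc (0:ℝ) σ := by
    intro u h0 h1
    constructor <;> nlinarith
  have harg2 : ∀ u : ℝ, 1/2 ≤ u → u ≤ 1 → τ + (2*u-1)*(1-τ) ∈ Icc τ 1 := by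
    intro u h0 h1
    constructor <;> nlinarith
  have hIccσ : Icc (0:ℝ) σ ⊆ Icc 0 1 := Icc_subset_Icc (le_refl 0) hσmem.2
  have hIccτ : Icc τ 1 ⊆ Icc (0:ℝ) 1 := Icc_subset_Icc hτ0 (le_refl 1)
  have hfval1 : ∀ u : ℝ, 0 ≤ u → u ≤ 1/2 → f u = a (2*σ*u) := by
    intro u h0 h1
    rw [hf_def]
    simp only [if_pos h1]
    rw [clampI_eq (hIccσ (harg1 u h0 h1))]
  have hfval2 : ∀ u : ℝ, 1/2 < u → u ≤ 1 → f u = b (τ + (2*u-1)*(1-τ)) := by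
    intro u h0 h1
    rw [hf_def]
    simp only [if_neg (not_le.2 h0)]
    rw [clampI_eq (hIccτ (harg2 u h0.le h1))]
  have hcross : ∀ u v : ℝ, 0 ≤ u → u ≤ 1/2 → 1/2 < v → v ≤ 1 → f u ≠ f v := by
    intro u v hu0 hu1 hv0 hv1 h
    rw [hfval1 u hu0 hu1, hfval2 v hv0 hv1] at h
    have hmemA : b (τ + (2*v-1)*(1-τ)) ∈ A := ⟨2*σ*u, hIccσ (harg1 u hu0 hu1), h⟩
    have := hτmax _ (hIccτ (harg2 v hv0.le hv1)) hmemA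
    nlinarith
  have hfInj : InjOn f (Icc 0 1) := by
    intro u hu v hv huv
    rcases le_or_gt u (1/2) with h1u | h1u <;> rcases le_or_gt v (1/2) with h1v | h1v
    · rw [hfval1 u hu.1 h1u, hfval1 v hv.1 h1v] at huv
      have := haInj (hIccσ (harg1 u hu.1 h1u)) (hIccσ (harg1 v hv.1 h1v)) huv
      have h2σ : (2*σ) ≠ 0 := by positivity
      exact mul_left_cancel₀ h2σ this
    · exact absurd huv (hcross u v hu.1 h1u h1v hv.2)
    · exact absurd huv.symm (hcross v u hv.1 h1v h1u hu.2)
    · rw [hfval2 u h1u hu.2, hfval2 v h1v hv.2] at huv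
      have := hbInj (hIccτ (harg2 u h1u.le hu.2)) (hIccτ (harg2 v h1v.le hv.2)) huv
      have h1τ : (1:ℝ) - τ ≠ 0 := by linarith
      nlinarith [this]
  have hf0 : f 0 = x := by
    rw [hfval1 0 (le_refl 0) (by norm_num), show 2*σ*(0:ℝ) = 0 by ring, ha0]
  have hf1 : f 1 = z' := by
    rw [hfval2 1 (by norm_num) (le_refl 1), show τ + (2*(1:ℝ)-1)*(1-τ) = 1 by ring, hb1]
  have hfimg : f '' Icc 0 1 = a '' Icc 0 σ ∪ b '' Icc τ 1 := by
    apply Subset.antisymm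
    · rintro w ⟨u, hu, rfl⟩
      rcases le_or_gt u (1/2) with h1u | h1u
      · rw [hfval1 u hu.1 h1u]
        exact Or.inl ⟨2*σ*u, harg1 u hu.1 h1u, rfl⟩
      · rw [hfval2 u h1u hu.2]
        exact Or.inr ⟨_, harg2 u h1u.le hu.2, rfl⟩
    · rintro w (⟨r, hr, rfl⟩ | ⟨r, hr, rfl⟩)
      · refine ⟨r/(2*σ), ⟨div_nonneg hr.1 (by positivity), ?_⟩, ?_⟩
        · rw [div_le_one (by positivity)]; linarith [hr.2]
        · rw [hfval1 (r/(2*σ)) (div_nonneg hr.1 (by positivity))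
            (by rw [div_le_div_iff₀ (by positivity) (by norm_num)]; linarith [hr.2]),
            mul_div_cancel₀ _ (by positivity : (2:ℝ)*σ ≠ 0)]
      · rcases eq_or_lt_of_le hr.1 with rfl | hτr
        · refine ⟨1/2, ⟨by norm_num, by norm_num⟩, ?_⟩
          rw [hfval1 (1/2) (by norm_num) (le_refl _), show 2*σ*(1/2:ℝ) = σ by ring, hσ]
        · set q := (r - τ)/(1 - τ) with hq_def
          have h1τ : (0:ℝ) < 1 - τ := by linarith
          have hq0 : 0 < q := div_pos (by linarith) h1τ
          have hq1 : q ≤ 1 := by rw [div_le_one h1τ]; linarith [hr.2]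
          refine ⟨(1+q)/2, ⟨by linarith, by linarith⟩, ?_⟩
          rw [hfval2 ((1+q)/2) (by linarith) (by linarith)]
          congr 1
          rw [show 2*((1+q)/2)-1 = q by ring, hq_def,
            div_mul_cancel₀ _ (ne_of_gt h1τ)]
          ring
  have arcC : IsArcIn (a '' Icc 0 σ ∪ b '' Icc τ 1) x z' :=
    ⟨f, hfc.continuousOn, hfInj, hf0, hf1, hfimg⟩
  have arcG : IsArcIn (geodImg hT x z') x z' := by
    have := isArcIn_of_geodesic (geodFun_geodesic hT x z')
      (by rw [geodFun_zero, geodFun_one]; exact hxz')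
    rwa [geodFun_zero, geodFun_one] at this
  have hEq := hT.unique_arc x z' hxz' _ _ arcG arcC
  rw [hEq]
  exact union_subset_union (image_mono (f := a) hIccσ) (image_mono (f := b) hIccτ)

end Tripod

section Core
variable {T : Type*} [MetricSpace T]

lemma geod_subset_path (hT : IsMetricTree T) {η β : ℝ → T}
    (hη : IsGeodesicPath η) (hβ : ContinuousOn β (Icc 0 1))
    (h0 : β 0 = η 0) (h1 : β 1 = η 1) :
    η '' Icc 0 1 ⊆ β '' Icc 0 1 := by
  by_cases hne : η 0 = η 1
  · rintro w ⟨s, hs, rfl⟩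
    rw [hη.const hne s hs, ← h0]
    exact ⟨0, ⟨le_refl 0, zero_le_one⟩, rfl⟩
  intro p hp
  by_contra hpK
  have hβ0K : η 0 ∈ β '' Icc 0 1 := ⟨0, ⟨le_refl 0, zero_le_one⟩, h0⟩
  have hβ1K : η 1 ∈ β '' Icc 0 1 := ⟨1, ⟨zero_le_one, le_refl 1⟩, h1⟩
  have hp0 : p ≠ η 0 := fun h => hpK (h ▸ hβ0K)
  have hp1 : p ≠ η 1 := fun h => hpK (h ▸ hβ1K)
  have hKconn : IsPreconnected (β '' Icc 0 1) := isPreconnected_Icc.image β hβ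
  set U := {w : T | p ∉ geodImg hT (η 0) w} with hU_def
  set V := {w : T | w ≠ p ∧ p ∈ geodImg hT (η 0) w} with hV_def
  have hUopen : IsOpen U := by
    rw [Metric.isOpen_iff]
    intro w hw
    have hAne : (geodImg hT (η 0) w).Nonempty := ⟨η 0, left_mem_geodImg hT _ _⟩
    have hAcl : IsClosed (geodImg hT (η 0) w) :=
      (isCompact_Icc.image_of_continuousOn
        (geodFun_geodesic hT (η 0) w).continuousOn).isClosed
    have hε : 0 < Metric.infDist p (geodImg hT (η 0) w) :=
      (hAcl.notMem_iff_infDist_pos hAne).1 hw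
    refine ⟨_, hε, ?_⟩
    intro w' hw'
    rw [Metric.mem_ball] at hw'
    intro hpw'
    rcases geodImg_subset_union hT (η 0) w w' hpw' with h | h
    · exact hw h
    · have h1' : dist w p ≤ dist w w' := le_trans (dist_le_of_mem_geodImg hT h) (le_refl _)
      have h2' : Metric.infDist p (geodImg hT (η 0) w) ≤ dist p w :=
        Metric.infDist_le_dist_of_mem (right_mem_geodImg hT _ _)
      rw [dist_comm w' w] at hw'
      rw [dist_comm] at h2'
      linarith
  have hVopen : IsOpen V := by
    rw [Metric.isOpen_iff]
    intro w hw
    obtain ⟨hwp, hpw⟩ := hw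
    refine ⟨dist w p, dist_pos.2 hwp, ?_⟩
    intro w' hw'
    rw [Metric.mem_ball, dist_comm] at hw'
    constructor
    · intro h
      subst h
      linarith
    · rcases geodImg_subset_union hT (η 0) w' w hpw with h | h
      · exact h
      · exfalso
        rw [geodImg_symm] at h
        have := dist_le_of_mem_geodImg hT h
        linarith
  have hcover : β '' Icc 0 1 ⊆ U ∪ V := by
    intro w hw
    by_cases h : p ∈ geodImg hT (η 0) w
    · exact Or.inr ⟨fun he => hpK (he ▸ hw), h⟩
    · exact Or.inl h
  have hUne : (β '' Icc 0 1 ∩ U).Nonempty := by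
    refine ⟨η 0, hβ0K, ?_⟩
    intro h
    exact hp0 (eq_of_mem_geodImg_self hT h)
  have hVne : (β '' Icc 0 1 ∩ V).Nonempty := by
    refine ⟨η 1, hβ1K, Ne.symm hp1, ?_⟩
    rw [← geodImg_eq hT hη rfl rfl]
    exact hp
  obtain ⟨w, _, hwU, hwV⟩ := hKconn U V hUopen hVopen hcover hUne hVne
  exact hwU hwV.2

end Core


/-- In a metric tree, given a geodesic `η` with distinct endpoints and a continuous path
`β` with the same endpoints, every partition `0 = t₀ < ... < t_{n+1} = 1` admits a
partition `0 = t₀* < ... < t_{n+1}* = 1` with `β(tᵢ*) = η(tᵢ)` for all `i`. -/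
theorem stmt5 {T : Type*} [MetricSpace T] (hT : IsMetricTree T)
    (η β : ℝ → T) (hη : IsGeodesicPath η) (hne : η 0 ≠ η 1)
    (hβ : ContinuousOn β (Icc 0 1)) (h0 : β 0 = η 0) (h1 : β 1 = η 1)
    (n : ℕ) (t : Fin (n + 2) → ℝ) (ht : StrictMono t)
    (ht0 : t 0 = 0) (ht1 : t (Fin.last (n + 1)) = 1) :
    ∃ ts : Fin (n + 2) → ℝ, StrictMono ts ∧ ts 0 = 0 ∧ ts (Fin.last (n + 1)) = 1 ∧
      ∀ i, β (ts i) = η (t i) := by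
  have hD : InjOn η (Icc 0 1) := hη.injOn hne
  have htmem : ∀ i, t i ∈ Icc (0:ℝ) 1 := by
    intro i
    constructor
    · rw [← ht0]; exact ht.monotone (Fin.zero_le i)
    · rw [← ht1]; exact ht.monotone (Fin.le_last i)
  set S : Fin (n+2) → Set ℝ := fun i => {u : ℝ | u ∈ Icc (0:ℝ) 1 ∧ β u = η (t i)}
    with hS_def
  have hSsub := geod_subset_path hT hη hβ h0 h1
  have hSne : ∀ i, (S i).Nonempty := by
    intro i
    obtain ⟨u, hu, hbu⟩ := hSsub ⟨t i, htmem i, rfl⟩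
    exact ⟨u, hu, hbu⟩
  have hScl : ∀ i, IsClosed (S i) := by
    intro i
    have : S i = Icc 0 1 ∩ β ⁻¹' {η (t i)} := by ext u; simp [hS_def]
    rw [this]
    exact hβ.preimage_isClosed_of_isClosed isClosed_Icc isClosed_singleton
  have hSbdd : ∀ i, BddAbove (S i) := fun i => ⟨1, fun u hu => hu.1.2⟩
  set L : Fin (n+2) → ℝ := fun i => sSup (S i) with hL_def
  have hLS : ∀ i, L i ∈ S i := fun i => (hScl i).csSup_mem (hSne i) (hSbdd i)
  have hLmem : ∀ i, L i ∈ Icc (0:ℝ) 1 := fun i => (hLS i).1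
  have hLβ : ∀ i, β (L i) = η (t i) := fun i => (hLS i).2
  have hkey : ∀ i j : Fin (n+2), i < j → L i < L j := by
    intro i j hij
    have hti1 : t i < 1 := by
      rw [← ht1]; exact ht (lt_of_lt_of_le hij (Fin.le_last j))
    have htij : t i < t j := ht hij
    have hLi1 : L i < 1 := by
      rcases lt_or_eq_of_le (hLmem i).2 with h | h
      · exact h
      · exfalso
        have hb : η 1 = η (t i) := by rw [← h1, ← hLβ i, h]
        have := hD ⟨zero_le_one, le_refl 1⟩ (htmem i) hb
        linarith
    set a := L i with ha_def
    have ha : a ∈ Icc (0:ℝ) 1 := hLmem i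
    have hrepg : IsGeodesicPath (fun u => η (t i + u * (1 - t i))) :=
      hη.reparam (htmem i).1 hti1.le (le_refl 1)
    set β' : ℝ → T := fun u => β (a + u * (1 - a)) with hβ'_def
    have hβ'c : ContinuousOn β' (Icc 0 1) := by
      apply hβ.comp (by fun_prop : Continuous (fun u : ℝ => a + u*(1-a))).continuousOn
      intro u hu
      simp only
      constructor <;> nlinarith [ha.1, ha.2, hu.1, hu.2]
    have hβ'0 : β' 0 = (fun u => η (t i + u * (1 - t i))) 0 := by
      simp only [hβ'_def]
      rw [show a + (0:ℝ)*(1-a) = a by ring, show t i + (0:ℝ)*(1-t i) = t i by ring]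
      exact hLβ i
    have hβ'1 : β' 1 = (fun u => η (t i + u * (1 - t i))) 1 := by
      simp only [hβ'_def]
      rw [show a + (1:ℝ)*(1-a) = 1 by ring, show t i + (1:ℝ)*(1-t i) = 1 by ring]
      exact h1
    have hsub := geod_subset_path hT hrepg hβ'c hβ'0 hβ'1
    have hmemj : η (t j) ∈ (fun u => η (t i + u*(1 - t i))) '' Icc 0 1 := by
      refine ⟨(t j - t i)/(1 - t i),
        ⟨div_nonneg (by linarith) (by linarith), ?_⟩, ?_⟩
      · rw [div_le_one (by linarith)]
        linarith [(htmem j).2]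
      · simp only
        congr 1
        rw [div_mul_cancel₀ _ (by linarith : (1:ℝ) - t i ≠ 0)]
        ring
    obtain ⟨v, hv, hbv⟩ := hsub hmemj
    have hvmem : a + v * (1-a) ∈ Icc (0:ℝ) 1 := by
      constructor <;> nlinarith [ha.1, ha.2, hv.1, hv.2]
    have hub : a + v*(1-a) ∈ S j := ⟨hvmem, hbv⟩
    have h3 : a ≤ a + v*(1-a) := by nlinarith [ha.2, hv.1]
    have h4 : a + v*(1-a) ≤ L j := le_csSup (hSbdd j) hub
    have h5 : L j ≠ a := by
      intro h
      have hb : η (t i) = η (t j) := by rw [← hLβ i, ← hLβ j, h, ha_def]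
      have := hD (htmem i) (htmem j) hb
      linarith
    exact lt_of_le_of_ne (le_trans h3 h4) (Ne.symm h5)
  set ts : Fin (n+2) → ℝ := fun i => if i = 0 then 0 else L i with hts_def
  have hL0pos : ∀ j : Fin (n+2), j ≠ 0 → 0 < L j := by
    intro j hj
    rcases lt_or_eq_of_le (hLmem j).1 with h | h
    · exact h
    · exfalso
      have hb : η 0 = η (t j) := by rw [← h0, ← hLβ j, ← h]
      have h' := hD ⟨le_refl 0, zero_le_one⟩ (htmem j) hb
      have : t j = t 0 := by rw [ht0, ← h']
      exact hj (ht.injective this)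
  refine ⟨ts, ?_, ?_, ?_, ?_⟩
  · intro i j hij
    have hj0 : j ≠ 0 := by
      intro h
      subst h
      exact absurd hij (Fin.not_lt_zero i)
    by_cases hi0 : i = 0
    · subst hi0
      simp only [hts_def, if_pos rfl, if_neg hj0]
      exact hL0pos j hj0
    · simp only [hts_def, if_neg hi0, if_neg hj0]
      exact hkey i j hij
  · simp [hts_def]
  · have hlast : (Fin.last (n+1) : Fin (n+2)) ≠ 0 := by
      simp [Fin.ext_iff]
    simp only [hts_def, if_neg hlast]
    have h1S : (1:ℝ) ∈ S (Fin.last (n+1)) := ⟨⟨zero_le_one, le_refl 1⟩, by rw [h1, ht1]⟩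
    exact le_antisymm (hLmem _).2 (le_csSup (hSbdd _) h1S)
  · intro i
    by_cases hi0 : i = 0
    · subst hi0
      simp only [hts_def, if_pos rfl]
      rw [h0, ht0]
    · simp only [hts_def, if_neg hi0]
      exact hLβ i
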